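/- Let H be a finite-dimensional complex Hilbert space of dimension N, with three copies H1, H2, H3, orthonormal bases (ε''_n) of H1, (ε'_h) of H2, (ε_α) of H3, and let (λ_{hα}) be an N×N unitary matrix. Define ψ := Σ_{h,α} λ_{hα} ε'_h ⊗ ε_α ∈ H2 ⊗ H3 and ξ := N^{-1/2} Σ_μ ε''_μ ⊗ ε'_μ ∈ H1 ⊗ H2, and let F := |ξ⟩⟨ξ| ⊗ 1_3. Let U : H3 → H1 be the unitary determined by U ε_α = Σ_h conj(λ_{hα}) ε''_h. Then for every density operator ρ on H1, the partial trace over H1 ⊗ H2 of F (ρ ⊗ |ψ⟩⟨ψ|) F equals (1/N) U* ρ U. -/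

import Mathlib

open scoped BigOperators ComplexOrder

/-- The rank-one operator `|v⟩⟨v| : x ↦ ⟨v,x⟩v`, as a matrix. -/
noncomputable def outer {ι : Type*} (v : ι → ℂ) : Matrix ι ι ℂ :=
  fun i j => v i * star (v j)

/-- Partial trace over the first two tensor factors. -/
noncomputable def ptrace12 {ι₁ ι₂ ι₃ : Type*} [Fintype ι₁] [Fintype ι₂]
    (Q : Matrix (ι₁ × ι₂ × ι₃) (ι₁ × ι₂ × ι₃) ℂ) : Matrix ι₃ ι₃ ℂ :=
  fun a b => ∑ i : ι₁, ∑ h : ι₂, Q (i, h, a) (i, h, b)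

/-- **Proposition 3.1** (solution of the weak teleportation problem):
with `ψ = Σ λ_{hα} ε'_h ⊗ ε_α`, `ξ = N^{-1/2} Σ_μ ε''_μ ⊗ ε'_μ`,
`F = |ξ⟩⟨ξ| ⊗ 1₃` and `U ε_α = Σ_h conj(λ_{hα}) ε''_h`, one has
`tr₁₂ (F (ρ ⊗ |ψ⟩⟨ψ|) F) = (1/N) U* ρ U` for every density operator `ρ` on `H₁`.
(All three spaces are `ℂ^N`; vectors and operators are written in the fixed
orthonormal bases, so `H₁ = H₂ = H₃ = Fin N → ℂ`.) -/
theorem weak_teleportation_solution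
    (N : ℕ) (hN : 0 < N)
    (L : Matrix (Fin N) (Fin N) ℂ) (hL : L ∈ Matrix.unitaryGroup (Fin N) ℂ)
    (ψ : Fin N × Fin N → ℂ) (hψ : ∀ h a, ψ (h, a) = L h a)
    (ξ : Fin N × Fin N → ℂ)
    (hξ : ∀ μ μ', ξ (μ, μ') = if μ = μ' then (((Real.sqrt N)⁻¹ : ℝ) : ℂ) else 0)
    (F : Matrix (Fin N × Fin N × Fin N) (Fin N × Fin N × Fin N) ℂ)
    (hF : ∀ p q, F p q =
      ξ (p.1, p.2.1) * star (ξ (q.1, q.2.1)) * (if p.2.2 = q.2.2 then 1 else 0))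
    (U : Matrix (Fin N) (Fin N) ℂ) (hU : ∀ h a, U h a = star (L h a)) :
    ∀ ρ : Matrix (Fin N) (Fin N) ℂ, ρ.PosSemidef → ρ.trace = 1 →
      ptrace12 (F * (Matrix.of fun (p q : Fin N × Fin N × Fin N) => ρ p.1 q.1 * ψ p.2 * star (ψ q.2)) * F) =
        ((N : ℂ))⁻¹ • (U.conjTranspose * ρ * U) := by
  intro ρ _ _
  set c : ℂ := (((Real.sqrt N)⁻¹ : ℝ) : ℂ) with hc
  have hcc : c * c = (N : ℂ)⁻¹ := by
    rw [hc, ← Complex.ofReal_mul, ← mul_inv, Real.mul_self_sqrt (Nat.cast_nonneg N),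
      Complex.ofReal_inv, Complex.ofReal_natCast]
  have hstarc : star c = c := by
    simp [hc]
  have hF' : ∀ p q : Fin N × Fin N × Fin N, F p q =
      if p.1 = p.2.1 ∧ q.1 = q.2.1 ∧ p.2.2 = q.2.2 then c * c else 0 := by
    intro p q
    rw [hF, hξ, hξ]
    by_cases h1 : p.1 = p.2.1 <;> by_cases h2 : q.1 = q.2.1 <;>
      by_cases h3 : p.2.2 = q.2.2 <;> simp [h1, h2, h3, hstarc]
  funext a b
  simp only [ptrace12, Matrix.mul_apply, hF', hψ, Matrix.of_apply]
  simp only [Fintype.sum_prod_type, ite_mul, mul_ite, zero_mul, mul_zero,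
    Finset.sum_ite_eq, Finset.sum_ite_eq', Finset.mem_univ, if_true]
  simp only [ite_and, mul_ite, ite_mul, zero_mul, mul_zero, Finset.sum_ite_irrel,
    Finset.sum_ite_eq, Finset.sum_ite_eq', Finset.mem_univ, if_true, Finset.sum_const_zero]
  simp only [Matrix.smul_apply, Matrix.mul_apply, Matrix.conjTranspose_apply, hU, star_star,
    Finset.sum_const, Finset.card_univ, Fintype.card_fin, nsmul_eq_mul, smul_eq_mul,
    ← Finset.sum_mul, ← Finset.mul_sum, hcc]
  have hrw : ∀ i : Fin N, (∑ i1 : Fin N, ρ i1 i * L i1 a) = ∑ x1 : Fin N, L x1 a * ρ x1 i :=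
    fun i => Finset.sum_congr rfl fun _ _ => mul_comm _ _
  have hN0 : (N : ℂ) ≠ 0 := Nat.cast_ne_zero.mpr hN.ne'
  simp only [hrw]
  field_simp
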